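/- (Lower bound for the elastic energy of Theta-networks.) Let γ¹, γ², γ³ be three arclength-parametrized regular curves of class H², γ^i : [0, ℓ_i] → ℝ² with ℓ_i > 0, forming a Theta-network: γ¹(0) = γ²(0) = γ³(0), γ¹(ℓ₁) = γ²(ℓ₂) = γ³(ℓ₃), and at each of the two junctions the three outer unit tangent vectors form pairwise angles of 2π/3, i.e. ⟨γ^i{}'(0), γ^j{}'(0)⟩ = −1/2 for all i ≠ j and ⟨γ^i{}'(ℓ_i), γ^j{}'(ℓ_j)⟩ = −1/2 for all i ≠ j. Then the total elastic energy satisfies Σ_{i=1}^3 ( ∫₀^{ℓ_i} |γ^i{}''(s)|² ds + ℓ_i ) ≥ 16π/3. -/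

import Mathlib

open MeasureTheory Set
open scoped RealInnerProductSpace

namespace ThetaAux
open Real



noncomputable def dZ (x : ℝ) : ℝ := |x - 2*π*(round (x/(2*π)) : ℤ)|

lemma two_pi_pos : (0:ℝ) < 2*π := by positivity

lemma abs_form (x : ℝ) (k : ℤ) : |x - 2*π*k| = (2*π) * |x/(2*π) - (k:ℝ)| := by
  have h2 : (0:ℝ) < 2*π := two_pi_pos
  have e : x - 2*π*k = (2*π) * (x/(2*π) - (k:ℝ)) := by field_simp
  rw [e, abs_mul, abs_of_pos h2]

lemma dZ_le (x : ℝ) (k : ℤ) : dZ x ≤ |x - 2*π*k| := by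
  have h := round_le (x/(2*π)) k
  rw [dZ, abs_form, abs_form]
  exact mul_le_mul_of_nonneg_left h (le_of_lt two_pi_pos)

lemma dZ_eq (x : ℝ) : ∃ k : ℤ, dZ x = |x - 2*π*k| := ⟨_, rfl⟩

lemma dZ_nonneg (x : ℝ) : 0 ≤ dZ x := abs_nonneg _

lemma dZ_le_pi (x : ℝ) : dZ x ≤ π := by
  have h := abs_sub_round (x/(2*π))
  rw [dZ, abs_form]
  calc (2*π) * |x/(2*π) - (round (x/(2*π)) : ℤ)| ≤ (2*π) * (1/2) :=
        mul_le_mul_of_nonneg_left h (le_of_lt two_pi_pos)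
    _ = π := by ring

lemma dZ_neg (x : ℝ) : dZ (-x) = dZ x := by
  have h1 : ∀ y : ℝ, dZ (-y) ≤ dZ y := by
    intro y
    obtain ⟨k, hk⟩ := dZ_eq y
    calc dZ (-y) ≤ |(-y) - 2*π*(-k : ℤ)| := dZ_le _ _
      _ = |y - 2*π*k| := by push_cast; rw [← abs_neg]; ring_nf
      _ = dZ y := hk.symm
  have := h1 (-x)
  rw [neg_neg] at this
  exact le_antisymm (h1 x) this

lemma dZ_add_le (x y : ℝ) : dZ (x + y) ≤ dZ x + dZ y := by
  obtain ⟨k, hk⟩ := dZ_eq x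
  obtain ⟨l, hl⟩ := dZ_eq y
  calc dZ (x+y) ≤ |(x+y) - 2*π*((k+l : ℤ))| := dZ_le _ _
    _ ≤ |x - 2*π*k| + |y - 2*π*l| := by
        push_cast
        have : (x+y) - 2*π*((k:ℝ)+l) = (x - 2*π*k) + (y - 2*π*l) := by ring
        rw [this]; exact abs_add_le _ _
    _ = dZ x + dZ y := by rw [hk, hl]

lemma dZ_add_int (x : ℝ) (n : ℤ) : dZ (x + 2*π*n) = dZ x := by
  apply le_antisymm
  · obtain ⟨k, hk⟩ := dZ_eq x
    calc dZ (x + 2*π*n) ≤ |(x + 2*π*n) - 2*π*((k+n : ℤ))| := dZ_le _ _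
      _ = |x - 2*π*k| := by push_cast; ring_nf
      _ = dZ x := hk.symm
  · obtain ⟨k, hk⟩ := dZ_eq (x + 2*π*n)
    calc dZ x ≤ |x - 2*π*((k-n : ℤ))| := dZ_le _ _
      _ = |(x + 2*π*n) - 2*π*k| := by push_cast; ring_nf
      _ = dZ (x + 2*π*n) := hk.symm

lemma dZ_abs_le_pi (x : ℝ) (hx : |x| ≤ π) : dZ x = |x| := by
  apply le_antisymm
  · simpa using dZ_le x 0
  · obtain ⟨k, hk⟩ := dZ_eq x
    rcases eq_or_ne k 0 with h | h
    · simp [h] at hk; rw [hk]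
    · have hk1 : (1:ℝ) ≤ |(k:ℝ)| := by
        have h1 : (1:ℤ) ≤ |k| := Int.one_le_abs h
        calc (1:ℝ) = ((1:ℤ):ℝ) := by norm_num
          _ ≤ ((|k|:ℤ):ℝ) := by exact_mod_cast h1
          _ = |(k:ℝ)| := by push_cast; ring
      have h2 : (0:ℝ) < 2*π := two_pi_pos
      have hrev : |x - 2*π*k| ≥ |2*π*(k:ℝ)| - |x| := by
        have := abs_sub_abs_le_abs_sub (2*π*(k:ℝ)) x
        rw [abs_sub_comm] at this
        linarith
      have e : |2*π*(k:ℝ)| = 2*π*|(k:ℝ)| := by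
        rw [abs_mul, abs_of_pos h2]
      have hπ : (0:ℝ) < π := pi_pos
      rw [hk]
      nlinarith [hrev, hk1, hx, e]

lemma dZ_pi : dZ π = π := by
  rw [dZ_abs_le_pi π (by rw [abs_of_pos pi_pos])]
  exact abs_of_pos pi_pos

lemma dZ_sub_pi (x : ℝ) : dZ (x - π) = π - dZ x := by
  apply le_antisymm
  · obtain ⟨k, hk⟩ := dZ_eq x
    have hu : |x - 2*π*k| ≤ π := hk ▸ dZ_le_pi x
    set u := x - 2*π*k with hu'
    have hx : x - π = (u - π) + 2*π*k := by rw [hu']; ring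
    rw [hx, dZ_add_int]
    rcases le_or_gt 0 u with h | h
    · have : dZ (u - π) ≤ |u - π| := by simpa using dZ_le (u-π) 0
      have habs : |u| = u := abs_of_nonneg h
      have : dZ (u - π) ≤ π - u := by
        rw [abs_of_nonpos (by rw [habs] at hu; linarith)] at this
        linarith
      rw [hk, habs]; linarith
    · have e : u - π = (u + π) + 2*π*(-1 : ℤ) := by push_cast; ring
      rw [e, dZ_add_int]
      have : dZ (u + π) ≤ |u + π| := by simpa using dZ_le (u+π) 0
      have habs : |u| = -u := abs_of_neg h
      have : dZ (u + π) ≤ π + u := by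
        rw [abs_of_nonneg (by rw [habs] at hu; linarith)] at this
        linarith
      rw [hk, habs]; linarith
  · have h1 : dZ π ≤ dZ (x - π) + dZ (2*π - x) := by
      have e : π = (x - π) + (2*π - x) := by ring
      calc dZ π = dZ ((x - π) + (2*π - x)) := by rw [← e]
        _ ≤ _ := dZ_add_le _ _
    have h2 : dZ (2*π - x) = dZ x := by
      have e : 2*π - x = (-x) + 2*π*(1:ℤ) := by push_cast; ring
      rw [e, dZ_add_int, dZ_neg]
    rw [dZ_pi, h2] at h1
    linarith

lemma dZ_antipodal (x y : ℝ) : dZ x + dZ y + dZ (x - y) ≤ 2*π := by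
  have h : dZ (x - y) ≤ dZ (x - π) + dZ (π - y) := by
    have e : x - y = (x - π) + (π - y) := by ring
    rw [e]; exact dZ_add_le _ _
  have h2 : dZ (π - y) = dZ (y - π) := by rw [← dZ_neg (y - π)]; ring_nf
  rw [h2, dZ_sub_pi, dZ_sub_pi] at h
  linarith

lemma dZ_ge_two_pi_sub (x : ℝ) (hx : π ≤ |x|) : 2*π - |x| ≤ dZ x := by
  obtain ⟨k, hk⟩ := dZ_eq x
  rcases eq_or_ne k 0 with h | h
  · simp [h] at hk; rw [hk]; linarith
  · have hk1 : (1:ℝ) ≤ |(k:ℝ)| := by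
      have h1 : (1:ℤ) ≤ |k| := Int.one_le_abs h
      calc (1:ℝ) = ((1:ℤ):ℝ) := by norm_num
        _ ≤ ((|k|:ℤ):ℝ) := by exact_mod_cast h1
        _ = |(k:ℝ)| := by push_cast; ring
    have hrev : |x - 2*π*k| ≥ |2*π*(k:ℝ)| - |x| := by
      have := abs_sub_abs_le_abs_sub (2*π*(k:ℝ)) x
      rw [abs_sub_comm] at this
      linarith
    have e : |2*π*(k:ℝ)| = 2*π*|(k:ℝ)| := by
      rw [abs_mul, abs_of_pos two_pi_pos]
    have hπ : (0:ℝ) < π := pi_pos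
    rw [hk]
    nlinarith [hrev, hk1, e]

lemma cos_dZ (x : ℝ) : Real.cos (dZ x) = Real.cos x := by
  obtain ⟨k, hk⟩ := dZ_eq x
  rw [hk, Real.cos_abs]
  have : x - 2*π*k = x + (-k) * (2*π) := by push_cast; ring
  rw [this]
  exact_mod_cast Real.cos_add_int_mul_two_pi x (-k)

lemma dZ_of_cos (x : ℝ) (h : Real.cos x = -(1/2)) : dZ x = 2*π/3 := by
  have h1 : Real.cos (dZ x) = Real.cos (2*π/3) := by
    rw [cos_dZ, h]
    have : (2*π/3) = π - π/3 := by ring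
    rw [this, Real.cos_pi_sub, Real.cos_pi_div_three]
  apply Real.injOn_cos ⟨dZ_nonneg x, dZ_le_pi x⟩ _ h1
  constructor
  · positivity
  · linarith [pi_pos]


noncomputable def g (x : ℝ) : ℝ := dZ x + dZ (x - 2*π/3) + dZ (x + 2*π/3)

lemma g_periodic : Function.Periodic g (2*π/3) := by
  intro x
  have e1 : x + 2*π/3 + 2*π/3 = (x - 2*π/3) + 2*π*(1:ℤ) := by push_cast; ring
  unfold g
  rw [show x + 2*π/3 - 2*π/3 = x by ring, e1, dZ_add_int]
  ring

lemma g_ge_small (y : ℝ) (hl : -(π/3) ≤ y) (hr : y ≤ π/3) : 4*π/3 ≤ g y := by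
  have hπ := pi_pos
  have e1 : dZ y = |y| := dZ_abs_le_pi y (by rw [abs_le]; constructor <;> linarith)
  have e2 : dZ (y + 2*π/3) = y + 2*π/3 := by
    rw [dZ_abs_le_pi _ (by rw [abs_le]; constructor <;> linarith)]
    rw [abs_of_nonneg (by linarith)]
  have e3 : dZ (y - 2*π/3) = 2*π/3 - y := by
    rw [dZ_abs_le_pi _ (by rw [abs_le]; constructor <;> linarith)]
    rw [abs_of_nonpos (by linarith)]; ring
  unfold g
  rw [e1, e2, e3]
  have := abs_nonneg y
  linarith

lemma g_ge (x : ℝ) : 4*π/3 ≤ g x := by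
  have h3 : (0:ℝ) < 2*π/3 := by positivity
  have hy : |x - (round (x / (2*π/3)) : ℤ) * (2*π/3)| ≤ π/3 := by
    have h := abs_sub_round (x/(2*π/3))
    have e : x - (round (x / (2*π/3)) : ℤ) * (2*π/3) = (2*π/3) * (x/(2*π/3) - (round (x / (2*π/3)) : ℤ)) := by
      field_simp
    rw [e, abs_mul, abs_of_pos h3]
    calc (2*π/3) * |x/(2*π/3) - ((round (x / (2*π/3)) : ℤ):ℝ)| ≤ (2*π/3) * (1/2) :=
      mul_le_mul_of_nonneg_left h (le_of_lt h3)
      _ = π/3 := by ring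
  obtain ⟨hl, hr⟩ := abs_le.mp hy
  have := g_ge_small _ hl hr
  rwa [g_periodic.sub_int_mul_eq] at this

lemma junction3 (x y z : ℝ) (hxy : dZ (x - y) = 2*π/3) (hxz : dZ (x - z) = 2*π/3)
    (hyz : dZ (y - z) = 2*π/3) : 4*π/3 ≤ dZ x + dZ y + dZ z := by
  have hπ := pi_pos
  have ex : ∀ u v : ℝ, dZ (u - v) = 2*π/3 → ∃ k : ℤ, u - v - 2*π*k = 2*π/3 ∨ u - v - 2*π*k = -(2*π/3) := by
    intro u v h
    obtain ⟨k, hk⟩ := dZ_eq (u - v)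
    rw [h] at hk
    rcases (abs_eq (by positivity : (0:ℝ) ≤ 2*π/3)).mp hk.symm with h' | h'
    · exact ⟨k, Or.inl h'⟩
    · exact ⟨k, Or.inr h'⟩
  obtain ⟨k₁, h₁⟩ := ex x y hxy
  obtain ⟨k₂, h₂⟩ := ex x z hxz
  obtain ⟨k₃, h₃⟩ := ex y z hyz
  have noint : ∀ (m : ℤ) (c : ℝ), (c = 1 ∨ c = -1) → c * (2*π/3) ≠ 2*π*m := by
    intro m c hc h
    have h' : π * (c * (2/3)) = π * (2*(m:ℝ)) := by linarith
    have hc2 : c * (2/3) = 2*(m:ℝ) := mul_left_cancel₀ pi_ne_zero h'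
    rcases hc with rfl | rfl
    · have h1 : ((3*m : ℤ):ℝ) = ((1:ℤ):ℝ) := by push_cast; linarith
      have : (3*m : ℤ) = 1 := Int.cast_injective h1
      omega
    · have h1 : ((3*m : ℤ):ℝ) = ((-1:ℤ):ℝ) := by push_cast; linarith
      have : (3*m : ℤ) = -1 := Int.cast_injective h1
      omega
  have key : ∀ a b : ℤ, y = x - 2*π*a - 2*π/3 → z = x - 2*π*b + 2*π/3 →
      4*π/3 ≤ dZ x + dZ y + dZ z := by
    intro a b hy hz
    subst hy hz
    have e1 : x - 2*π*a - 2*π/3 = (x - 2*π/3) + 2*π*(-a:ℤ) := by push_cast; ring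
    have e2 : x - 2*π*b + 2*π/3 = (x + 2*π/3) + 2*π*(-b:ℤ) := by push_cast; ring
    rw [e1, e2, dZ_add_int, dZ_add_int]
    have := g_ge x
    unfold g at this
    linarith
  have key' : ∀ a b : ℤ, y = x - 2*π*a + 2*π/3 → z = x - 2*π*b - 2*π/3 →
      4*π/3 ≤ dZ x + dZ y + dZ z := by
    intro a b hy hz
    subst hy hz
    have e1 : x - 2*π*a + 2*π/3 = (x + 2*π/3) + 2*π*(-a:ℤ) := by push_cast; ring
    have e2 : x - 2*π*b - 2*π/3 = (x - 2*π/3) + 2*π*(-b:ℤ) := by push_cast; ring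
    rw [e1, e2, dZ_add_int, dZ_add_int]
    have := g_ge x
    unfold g at this
    linarith
  rcases h₁ with h₁ | h₁ <;> rcases h₂ with h₂ | h₂ <;> rcases h₃ with h₃ | h₃
  · exfalso; exact noint (k₂ - k₁ - k₃) 1 (Or.inl rfl) (by push_cast; linarith)
  · exfalso; exact noint (k₂ - k₁ - k₃) (-1) (Or.inr rfl) (by push_cast; linarith)
  · exact key k₁ k₂ (by linarith) (by linarith)
  · exfalso; exact noint (k₂ - k₁ - k₃) 1 (Or.inl rfl) (by push_cast; linarith)
  · exfalso; exact noint (k₂ - k₁ - k₃) (-1) (Or.inr rfl) (by push_cast; linarith)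
  · exact key' k₁ k₂ (by linarith) (by linarith)
  · exfalso; exact noint (k₂ - k₁ - k₃) 1 (Or.inl rfl) (by push_cast; linarith)
  · exfalso; exact noint (k₂ - k₁ - k₃) (-1) (Or.inr rfl) (by push_cast; linarith)


/-- arcsin superadditivity -/
lemma arcsin_superadd {x y : ℝ} (hx : 0 ≤ x) (hy : 0 ≤ y) (hxy : x + y ≤ 1) :
    arcsin x + arcsin y ≤ arcsin (x + y) := by
  have hx1 : x ≤ 1 := by linarith
  have hy1 : y ≤ 1 := by linarith
  have hu0 : 0 ≤ arcsin x := arcsin_nonneg.mpr hx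
  have hv0 : 0 ≤ arcsin y := arcsin_nonneg.mpr hy
  have huv : arcsin x + arcsin y ≤ π/2 := by
    have h1 : (1 - x) ≤ Real.sqrt (1 - x^2) := by
      rw [show (1:ℝ) - x^2 = (1-x)*(1+x) by ring]
      calc 1 - x = Real.sqrt ((1-x)^2) := (Real.sqrt_sq (by linarith)).symm
        _ ≤ _ := Real.sqrt_le_sqrt (by nlinarith)
    have h2 : y ≤ Real.sqrt (1 - x^2) := by linarith
    have h3 : Real.sqrt (1 - x^2) = Real.sin (π/2 - arcsin x) := by
      rw [Real.sin_pi_div_two_sub, Real.cos_arcsin]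
    have h4 : arcsin y ≤ π/2 - arcsin x := by
      have hle : π/2 - arcsin x ∈ Icc (-(π/2)) (π/2) := by
        constructor
        · have := Real.arcsin_le_pi_div_two x; linarith [Real.pi_pos]
        · linarith
      calc arcsin y ≤ arcsin (Real.sin (π/2 - arcsin x)) := by
            apply Real.monotone_arcsin
            rw [← h3]; exact h2
        _ = π/2 - arcsin x := Real.arcsin_sin hle.1 hle.2
    linarith
  have hsin : Real.sin (arcsin x + arcsin y) ≤ x + y := by
    rw [Real.sin_add, Real.sin_arcsin (by linarith) hx1, Real.sin_arcsin (by linarith) hy1,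
      Real.cos_arcsin, Real.cos_arcsin]
    have s1 : Real.sqrt (1 - y^2) ≤ 1 := Real.sqrt_le_one.mpr (by nlinarith)
    have s2 : Real.sqrt (1 - x^2) ≤ 1 := Real.sqrt_le_one.mpr (by nlinarith)
    nlinarith [Real.sqrt_nonneg (1 - y^2), Real.sqrt_nonneg (1 - x^2)]
  calc arcsin x + arcsin y = arcsin (Real.sin (arcsin x + arcsin y)) :=
        (Real.arcsin_sin (by linarith) huv).symm
    _ ≤ arcsin (x + y) := Real.monotone_arcsin hsin

/-- arcsin polynomial bound -/
lemma arcsin_le_poly {x : ℝ} (hx0 : 0 ≤ x) (hx : x ≤ 1/2) : arcsin x ≤ x + 4*x^3 := by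
  rcases eq_or_lt_of_le hx0 with h | h
  · simp [← h]
  · have hx2 : x^2 ≤ 1/4 := by nlinarith
    have h4x : 4*x^3 ≤ x := by nlinarith [mul_le_mul_of_nonneg_left hx2 (by linarith : (0:ℝ) ≤ 4*x)]
    have ht1 : x + 4*x^3 ≤ 1 := by linarith
    have ht0 : 0 < x + 4*x^3 := by positivity
    have hsin : x ≤ Real.sin (x + 4*x^3) := by
      have hs := Real.sin_gt_sub_cube ht0
      have hcube : (x + 4*x^3)^3 ≤ (2*x)^3 :=
        pow_le_pow_left₀ (by positivity) (by linarith) 3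
      have h8 : (2*x)^3 = 8*x^3 := by ring
      nlinarith [pow_nonneg hx0 3]
    calc arcsin x ≤ arcsin (Real.sin (x + 4*x^3)) := Real.monotone_arcsin hsin
      _ = x + 4*x^3 := Real.arcsin_sin (by linarith [Real.pi_pos]) (by
          have := Real.pi_gt_three; linarith)

/-- branch 1 : p in range congruent to φ -/
lemma branch1 {m M p α β φ : ℝ} (hm : m ≤ M) (hp : p ∈ Icc m M) (hα : α ∈ Icc m M)
    (hβ : β ∈ Icc m M) (k : ℤ) (hpφ : p = φ + 2*π*k) :
    dZ (α - φ) + dZ (β - φ) ≤ 2*(M - m) - |α - β| := by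
  have h1 : dZ (α - φ) ≤ |α - p| := by
    have := dZ_le (α - φ) k
    calc dZ (α - φ) ≤ |α - φ - 2*π*k| := this
      _ = |α - p| := by rw [hpφ]; ring_nf
  have h2 : dZ (β - φ) ≤ |β - p| := by
    have := dZ_le (β - φ) k
    calc dZ (β - φ) ≤ |β - φ - 2*π*k| := this
      _ = |β - p| := by rw [hpφ]; ring_nf
  obtain ⟨hp1, hp2⟩ := hp
  obtain ⟨hα1, hα2⟩ := hα
  obtain ⟨hβ1, hβ2⟩ := hβ
  have key : |α - p| + |β - p| ≤ 2*(M - m) - |α - β| := by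
    rcases abs_cases (α - p) with ⟨e1, _⟩ | ⟨e1, _⟩ <;>
    rcases abs_cases (β - p) with ⟨e2, _⟩ | ⟨e2, _⟩ <;>
    rcases abs_cases (α - β) with ⟨e3, _⟩ | ⟨e3, _⟩ <;>
    rw [e1, e2, e3] <;> linarith
  linarith

/-- branch 2 : wide range -/
lemma branch2 {m M α β φ : ℝ} (hw : π ≤ M - m) (hα : α ∈ Icc m M) (hβ : β ∈ Icc m M) :
    dZ (α - φ) + dZ (β - φ) ≤ 2*(M - m) - |α - β| := by
  have hanti : dZ (α - φ) + dZ (β - φ) ≤ 2*π - dZ (α - β) := by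
    have := dZ_antipodal (α - φ) (β - φ)
    have e : (α - φ) - (β - φ) = α - β := by ring
    rw [e] at this
    linarith
  have hπ := pi_pos
  obtain ⟨hα1, hα2⟩ := hα
  obtain ⟨hβ1, hβ2⟩ := hβ
  have habM : |α - β| ≤ M - m := by
    rcases abs_cases (α - β) with ⟨e, _⟩ | ⟨e, _⟩ <;> rw [e] <;> linarith
  rcases le_or_gt (|α - β|) π with h | h
  · have heq : dZ (α - β) = |α - β| := dZ_abs_le_pi _ h
    linarith
  · have h2 : 2*π - |α - β| ≤ dZ (α - β) := dZ_ge_two_pi_sub _ (le_of_lt h)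
    linarith



lemma exists_lift (L : ℝ) (hL : 0 ≤ L) (z : ℝ → ℂ) (hzc : ContinuousOn z (Icc 0 L))
    (hz1 : ∀ s ∈ Icc (0:ℝ) L, ‖z s‖ = 1) :
    ∃ θ : ℝ → ℝ, ContinuousOn θ (Icc 0 L) ∧
      ∀ s ∈ Icc (0:ℝ) L, z s = Complex.exp ((θ s : ℂ) * Complex.I) := by
  obtain ⟨δ, hδ, hunif⟩ := Metric.uniformContinuousOn_iff.mp
    (isCompact_Icc.uniformContinuousOn_of_continuous hzc) 1 one_pos
  obtain ⟨n, hn⟩ := exists_nat_gt (L / δ)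
  have hn0 : 0 < (n:ℝ) := lt_of_le_of_lt (div_nonneg hL (le_of_lt hδ)) hn
  have hnn : (n:ℝ) ≠ 0 := ne_of_gt hn0
  have hstep : L / n < δ := by
    rw [div_lt_iff₀ hn0]
    calc L = (L/δ) * δ := by field_simp
      _ < n * δ := by
        apply mul_lt_mul_of_pos_right hn hδ
      _ = δ * n := by ring
  set t : ℕ → ℝ := fun k => L * k / n with ht
  have ht0 : t 0 = 0 := by simp [ht]
  have htn : t n = L := by simp only [ht]; exact mul_div_cancel_right₀ L hnn
  have htmono : ∀ j k : ℕ, j ≤ k → t j ≤ t k := by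
    intro j k hjk
    simp only [ht]
    gcongr
  have htL : ∀ k : ℕ, k ≤ n → t k ≤ L := by
    intro k hk
    have := htmono k n hk
    rwa [htn] at this
  have ht0le : ∀ k : ℕ, 0 ≤ t k := by
    intro k
    have := htmono 0 k (Nat.zero_le k)
    rwa [ht0] at this
  have htdiff : ∀ k : ℕ, t (k+1) - t k = L / n := by
    intro k
    simp only [ht]
    push_cast
    field_simp
    ring
  -- main induction
  have main : ∀ k : ℕ, k ≤ n → ∃ θ : ℝ → ℝ, ContinuousOn θ (Icc 0 (t k)) ∧
      ∀ s ∈ Icc (0:ℝ) (t k), z s = Complex.exp ((θ s : ℂ) * Complex.I) := by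
    intro k
    induction k with
    | zero =>
      intro _
      refine ⟨fun _ => (z 0).arg, continuousOn_const, ?_⟩
      intro s hs
      rw [ht0] at hs
      have hs0 : s = 0 := le_antisymm hs.2 hs.1
      subst hs0
      have h0L : (0:ℝ) ∈ Icc (0:ℝ) L := ⟨le_refl _, hL⟩
      have := Complex.norm_mul_exp_arg_mul_I (z 0)
      rw [hz1 0 h0L] at this
      simpa using this.symm
    | succ k IH =>
      intro hk1
      obtain ⟨θ, hθc, hθe⟩ := IH (Nat.le_of_succ_le hk1)
      set a := t k with ha
      set b := t (k+1) with hb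
      have hab : a ≤ b := htmono k (k+1) (Nat.le_succ k)
      have ha0 : 0 ≤ a := ht0le k
      have hbL : b ≤ L := htL (k+1) hk1
      have haL : a ∈ Icc (0:ℝ) L := ⟨ha0, le_trans hab hbL⟩
      have hzane : z a ≠ 0 := by
        intro h
        have := hz1 a haL
        rw [h] at this
        simp at this
      have hsubL : Icc a b ⊆ Icc (0:ℝ) L := fun y hy => ⟨le_trans ha0 hy.1, le_trans hy.2 hbL⟩
      have hclose : ∀ s ∈ Icc a b, ‖z s - z a‖ < 1 := by
        intro s hs
        have h1 : dist (z s) (z a) < 1 := by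
          apply hunif s (hsubL hs) a haL
          rw [Real.dist_eq, abs_of_nonneg (by linarith [hs.1])]
          calc s - a ≤ b - a := by linarith [hs.2]
            _ = L / n := by rw [hb, ha, htdiff]
            _ < δ := hstep
        rwa [Complex.dist_eq] at h1
      have hslit : ∀ s ∈ Icc a b, z s / z a ∈ Complex.slitPlane := by
        intro s hs
        rw [Complex.mem_slitPlane_iff]
        left
        have habs : ‖z s / z a - 1‖ < 1 := by
          rw [show z s / z a - 1 = (z s - z a) / z a by field_simp]
          rw [norm_div, hz1 a haL, div_one]
          exact hclose s hs
        have hre : |(z s / z a - 1).re| ≤ ‖z s / z a - 1‖ := Complex.abs_re_le_norm _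
        have heq : (z s / z a).re = 1 + (z s / z a - 1).re := by simp
        rw [heq]
        have hlt := abs_lt.mp (lt_of_le_of_lt hre habs)
        linarith [hlt.1]
      set ψ : ℝ → ℝ := fun s => θ a + (z s / z a).arg with hψ
      set θ' : ℝ → ℝ := fun s => if s ≤ a then θ s else ψ s with hθ'
      have hagree : ∀ y ∈ Icc a b, θ' y = ψ y := by
        intro y hy
        by_cases h : y ≤ a
        · have hya : y = a := le_antisymm h hy.1
          subst hya
          simp only [hθ', if_pos h, hψ]
          rw [div_self hzane, Complex.arg_one, add_zero]
        · simp only [hθ', if_neg h]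
      have hagree0 : ∀ y ∈ Icc (0:ℝ) a, θ' y = θ y := by
        intro y hy
        simp only [hθ', if_pos hy.2]
      have hccup : Icc (0:ℝ) a ∪ Icc a b = Icc (0:ℝ) b := Icc_union_Icc_eq_Icc ha0 hab
      refine ⟨θ', ?_, ?_⟩
      · rw [← hccup]
        intro x hx
        have hCW1 : ContinuousWithinAt θ' (Icc 0 a) x := by
          by_cases hmem : x ∈ Icc (0:ℝ) a
          · exact ((hθc x hmem).congr hagree0 (hagree0 x hmem))
          · exact continuousWithinAt_of_notMem_closure (by rwa [isClosed_Icc.closure_eq])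
        have hCW2 : ContinuousWithinAt θ' (Icc a b) x := by
          by_cases hmem : x ∈ Icc a b
          · have hzw : ContinuousWithinAt (fun s => z s / z a) (Icc a b) x :=
              ((hzc x (hsubL hmem)).mono hsubL).div_const _
            have harg : ContinuousAt Complex.arg (z x / z a) :=
              Complex.continuousAt_arg (hslit x hmem)
            have harg2 : ContinuousWithinAt (fun s => (z s / z a).arg) (Icc a b) x := by
              exact ContinuousAt.comp_continuousWithinAt (f := fun s => z s / z a) harg hzw
            have hψc : ContinuousWithinAt ψ (Icc a b) x :=
              continuousWithinAt_const.add harg2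
            exact hψc.congr hagree (hagree x hmem)
          · exact continuousWithinAt_of_notMem_closure (by rwa [isClosed_Icc.closure_eq])
        exact hCW1.union hCW2
      · intro s hs
        by_cases h : s ≤ a
        · rw [show θ' s = θ s from if_pos h]
          exact hθe s ⟨hs.1, h⟩
        · have hsab : s ∈ Icc a b := ⟨le_of_not_ge h, hs.2⟩
          rw [hagree s hsab, hψ]
          have habsw : ‖z s / z a‖ = 1 := by
            rw [norm_div, hz1 s (hsubL hsab), hz1 a haL]
            norm_num
          have hw : Complex.exp (((z s / z a).arg : ℂ) * Complex.I) = z s / z a := by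
            have := Complex.norm_mul_exp_arg_mul_I (z s / z a)
            rwa [habsw, Complex.ofReal_one, one_mul] at this
          have hza : Complex.exp ((θ a : ℂ) * Complex.I) = z a :=
            (hθe a ⟨ha0, le_refl a⟩).symm
          push_cast
          rw [add_mul, Complex.exp_add, hza, hw]
          field_simp
  obtain ⟨θ, h1, h2⟩ := main n (le_refl n)
  rw [htn] at h1 h2
  exact ⟨θ, h1, h2⟩


lemma abs_le_two_arcsin {Δ d : ℝ} (hΔ : |Δ| ≤ 1) (hd0 : 0 ≤ d) (hd1 : d ≤ 1)
    (h : |Real.sin (Δ/2)| ≤ d/2) : |Δ| ≤ 2 * arcsin (d/2) := by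
  have hπ := Real.pi_gt_three
  have habs : |Δ|/2 ≤ 1/2 := by linarith [hΔ]
  have habs0 : 0 ≤ |Δ|/2 := by positivity
  obtain ⟨hΔl, hΔr⟩ := abs_le.mp hΔ
  have h2 : Real.sin (|Δ|/2) = |Real.sin (Δ/2)| := by
    rcases le_or_gt 0 Δ with hs | hs
    · rw [abs_of_nonneg hs, abs_of_nonneg]
      apply Real.sin_nonneg_of_nonneg_of_le_pi (by linarith) (by linarith)
    · rw [abs_of_neg hs]
      rw [show -Δ/2 = -(Δ/2) by ring, Real.sin_neg]
      rw [abs_of_nonpos]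
      have : Real.sin (-(Δ/2)) ≥ 0 :=
        Real.sin_nonneg_of_nonneg_of_le_pi (by linarith) (by linarith)
      rw [Real.sin_neg] at this
      linarith
  have h3 : |Δ|/2 = arcsin (Real.sin (|Δ|/2)) :=
    (Real.arcsin_sin (by linarith) (by linarith)).symm
  have h4 : arcsin (Real.sin (|Δ|/2)) ≤ arcsin (d/2) := by
    apply Real.monotone_arcsin
    rw [h2]; exact h
  linarith [h3 ▸ h4]

section L1
variable {L : ℝ} {θ N : ℝ → ℝ}

lemma lift_local (hθc : ContinuousOn θ (Icc 0 L)) (hNc : ContinuousOn N (Icc 0 L))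
    (hNmono : ∀ ⦃s t : ℝ⦄, s ∈ Icc 0 L → t ∈ Icc 0 L → s ≤ t → N s ≤ N t)
    (hS : ∀ ⦃s t : ℝ⦄, s ∈ Icc 0 L → t ∈ Icc 0 L → s ≤ t →
      2*|Real.sin ((θ t - θ s)/2)| ≤ N t - N s)
    {a b : ℝ} (ha : a ∈ Icc (0:ℝ) L) (hb : b ∈ Icc (0:ℝ) L) (hab : a ≤ b)
    (hsmall : N b - N a ≤ 1) : |θ b - θ a| ≤ 2 * arcsin ((N b - N a)/2) := by
  have hπ := Real.pi_gt_three
  have hsub : Icc a b ⊆ Icc (0:ℝ) L := fun y hy => ⟨le_trans ha.1 hy.1, le_trans hy.2 hb.2⟩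
  set S := {s : ℝ | s ∈ Icc a b ∧ |θ s - θ a| ≤ 2 * arcsin ((N s - N a)/2)} with hs_def
  have haS : a ∈ S := by
    constructor
    · exact ⟨le_refl a, hab⟩
    · simp [Real.arcsin_zero]
  have hbdd : BddAbove S := ⟨b, fun x hx => hx.1.2⟩
  have hne : S.Nonempty := ⟨a, haS⟩
  set c := sSup S with hc_def
  have hac : a ≤ c := le_csSup hbdd haS
  have hcb : c ≤ b := csSup_le hne (fun x hx => hx.1.2)
  have hcab : c ∈ Icc a b := ⟨hac, hcb⟩
  have hc0L : c ∈ Icc (0:ℝ) L := hsub hcab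
  -- c ∈ S by sequential closure
  have hcS : c ∈ S := by
    obtain ⟨u, hu_mono, hu_tend, hu_mem⟩ := exists_seq_tendsto_sSup hne hbdd
    have hu_in : ∀ j, u j ∈ Icc a b := fun j => (hu_mem j).1
    have htendw : Filter.Tendsto u Filter.atTop (nhdsWithin c (Icc a b)) := by
      apply tendsto_nhdsWithin_of_tendsto_nhds_of_eventually_within u hu_tend
      exact Filter.Eventually.of_forall hu_in
    have hθct : Filter.Tendsto (fun j => θ (u j)) Filter.atTop (nhds (θ c)) :=
      ((hθc.mono hsub) c hcab).tendsto.comp htendw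
    have hNct : Filter.Tendsto (fun j => N (u j)) Filter.atTop (nhds (N c)) :=
      ((hNc.mono hsub) c hcab).tendsto.comp htendw
    refine ⟨hcab, ?_⟩
    have h1 : Filter.Tendsto (fun j => |θ (u j) - θ a|) Filter.atTop (nhds (|θ c - θ a|)) :=
      (hθct.sub_const _).abs
    have h2 : Filter.Tendsto (fun j => 2 * arcsin ((N (u j) - N a)/2)) Filter.atTop
        (nhds (2 * arcsin ((N c - N a)/2))) := by
      apply Filter.Tendsto.const_mul
      exact (Real.continuous_arcsin.continuousAt).tendsto.comp
        (((hNct.sub_const _).div_const 2))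
    exact le_of_tendsto_of_tendsto' h1 h2 (fun j => (hu_mem j).2)
  rcases eq_or_lt_of_le hcb with hceq | hclt
  · rw [← hceq]; exact hcS.2
  · exfalso
    -- find s₀ > c in S
    obtain ⟨δ', hδ', hcont⟩ := Metric.continuousWithinAt_iff.mp ((hθc.mono hsub) c hcab) 1 one_pos
    set s₀ := min b (c + δ'/2) with hs₀_def
    have hcs₀ : c < s₀ := lt_min hclt (by linarith)
    have hs₀ab : s₀ ∈ Icc a b := ⟨le_trans hac (le_of_lt hcs₀), min_le_left _ _⟩
    have hs₀d : dist s₀ c < δ' := by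
      rw [Real.dist_eq, abs_of_nonneg (by linarith [hcs₀])]
      calc s₀ - c ≤ (c + δ'/2) - c := by linarith [min_le_right b (c + δ'/2)]
        _ < δ' := by linarith
    have hθd : |θ s₀ - θ c| < 1 := by
      have := hcont hs₀ab hs₀d
      rwa [Real.dist_eq] at this
    set Δ := θ s₀ - θ c with hΔ_def
    set D₂ := N s₀ - N c with hD₂_def
    set D₁ := N c - N a with hD₁_def
    have hs₀0L : s₀ ∈ Icc (0:ℝ) L := hsub hs₀ab
    have ha0L : a ∈ Icc (0:ℝ) L := ha
    have hD₂0 : 0 ≤ D₂ := by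
      have := hNmono hc0L hs₀0L (le_of_lt hcs₀); linarith
    have hD₁0 : 0 ≤ D₁ := by
      have := hNmono ha0L hc0L hac; linarith
    have hsum_le : D₁ + D₂ ≤ 1 := by
      have := hNmono hs₀0L (hsub ⟨hab, le_refl b⟩) hs₀ab.2
      have hNb := hNmono hs₀0L hb hs₀ab.2
      simp only [hD₁_def, hD₂_def]
      linarith [hNb]
    have hchord := hS hc0L hs₀0L (le_of_lt hcs₀)
    have hΔarc : |Δ| ≤ 2 * arcsin (D₂/2) := by
      apply abs_le_two_arcsin (le_of_lt hθd) hD₂0 (by linarith)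
      linarith [hchord]
    have hsuper : arcsin (D₁/2) + arcsin (D₂/2) ≤ arcsin ((D₁ + D₂)/2) := by
      have := arcsin_superadd (by positivity) (by positivity)
        (by linarith : D₁/2 + D₂/2 ≤ 1)
      rw [show D₁/2 + D₂/2 = (D₁ + D₂)/2 by ring] at this
      exact this
    have hs₀S : s₀ ∈ S := by
      refine ⟨hs₀ab, ?_⟩
      have htri : |θ s₀ - θ a| ≤ |Δ| + |θ c - θ a| := by
        rw [hΔ_def]
        have := abs_add_le (θ s₀ - θ c) (θ c - θ a)
        simpa using this
      have hcS2 := hcS.2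
      have : (N s₀ - N a)/2 = (D₁ + D₂)/2 := by rw [hD₁_def, hD₂_def]; ring_nf
      rw [this]
      linarith [htri, hΔarc, hcS2, hsuper]
    have : s₀ ≤ c := le_csSup hbdd hs₀S
    linarith


lemma lift_global (hθc : ContinuousOn θ (Icc 0 L)) (hNc : ContinuousOn N (Icc 0 L))
    (hNmono : ∀ ⦃s t : ℝ⦄, s ∈ Icc 0 L → t ∈ Icc 0 L → s ≤ t → N s ≤ N t)
    (hS : ∀ ⦃s t : ℝ⦄, s ∈ Icc 0 L → t ∈ Icc 0 L → s ≤ t →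
      2*|Real.sin ((θ t - θ s)/2)| ≤ N t - N s)
    {a b : ℝ} (ha : a ∈ Icc (0:ℝ) L) (hb : b ∈ Icc (0:ℝ) L) (hab : a ≤ b) :
    |θ b - θ a| ≤ N b - N a := by
  -- small-interval estimate
  have hsmall_case : ∀ η : ℝ, 0 < η → η ≤ 1/2 → ∀ a' b' : ℝ, a' ∈ Icc (0:ℝ) L →
      b' ∈ Icc (0:ℝ) L → a' ≤ b' → N b' - N a' ≤ η →
      |θ b' - θ a'| ≤ (1 + 4*η^2) * (N b' - N a') := by
    intro η hη hη2 a' b' ha' hb' hab' hsm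
    have hD0 : 0 ≤ N b' - N a' := by linarith [hNmono ha' hb' hab']
    have hloc := lift_local hθc hNc hNmono hS ha' hb' hab' (by linarith)
    set D := N b' - N a' with hD_def
    clear_value D
    have hpoly : arcsin (D/2) ≤ D/2 + 4*(D/2)^3 :=
      arcsin_le_poly (by positivity) (by linarith)
    have hDD : D*D ≤ η*η := mul_le_mul hsm hsm hD0 hη.le
    have hDDD : D*(D*D) ≤ D*(η*η) := mul_le_mul_of_nonneg_left hDD hD0
    have hcube : 4*(D/2)^3 ≤ 2*η^2*(D/2) := by nlinarith [hDDD]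
    calc |θ b' - θ a'| ≤ 2 * arcsin (D/2) := hloc
      _ ≤ 2 * (D/2 + 2*η^2*(D/2)) := by linarith
      _ = (1 + 4*η^2/2) * D := by ring
      _ ≤ (1 + 4*η^2) * D := by nlinarith [sq_nonneg η, hD0]
  have key : ∀ η : ℝ, 0 < η → η ≤ 1/2 → ∀ n : ℕ, ∀ a' b' : ℝ, a' ∈ Icc (0:ℝ) L →
      b' ∈ Icc (0:ℝ) L → a' ≤ b' → N b' - N a' ≤ n * η →
      |θ b' - θ a'| ≤ (1 + 4*η^2) * (N b' - N a') := by
    intro η hη hη2 n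
    induction n with
    | zero =>
      intro a' b' ha' hb' hab' hn
      exact hsmall_case η hη hη2 a' b' ha' hb' hab' (by push_cast at hn; linarith)
    | succ n IH =>
      intro a' b' ha' hb' hab' hn
      by_cases hc : N b' - N a' ≤ η
      · exact hsmall_case η hη hη2 a' b' ha' hb' hab' hc
      · push_neg at hc
        have hNcont : ContinuousOn N (Icc a' b') :=
          hNc.mono (fun y hy => ⟨le_trans ha'.1 hy.1, le_trans hy.2 hb'.2⟩)
        have hval : N b' - η ∈ Icc (N a') (N b') := ⟨by linarith, by linarith⟩
        obtain ⟨u, huab, hu⟩ := intermediate_value_Icc hab' hNcont hval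
        have hu0L : u ∈ Icc (0:ℝ) L := ⟨le_trans ha'.1 huab.1, le_trans huab.2 hb'.2⟩
        have h1 : |θ u - θ a'| ≤ (1 + 4*η^2) * (N u - N a') := by
          apply IH a' u ha' hu0L huab.1
          rw [hu]
          push_cast at hn ⊢
          linarith
        have h2 : |θ b' - θ u| ≤ (1 + 4*η^2) * (N b' - N u) := by
          apply hsmall_case η hη hη2 u b' hu0L hb' huab.2
          rw [hu]; linarith
        have htri : |θ b' - θ a'| ≤ |θ b' - θ u| + |θ u - θ a'| := by
          have := abs_add_le (θ b' - θ u) (θ u - θ a')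
          simpa using this
        have : (1 + 4*η^2) * (N b' - N u) + (1 + 4*η^2) * (N u - N a')
            = (1 + 4*η^2) * (N b' - N a') := by ring
        linarith
  -- conclude
  have hD0 : 0 ≤ N b - N a := by linarith [hNmono ha hb hab]
  apply le_of_forall_pos_le_add
  intro ε hε
  set D := N b - N a with hD_def
  set A := ε / (4*(D+1)) with hA_def
  have hA0 : 0 < A := by
    apply div_pos hε
    nlinarith
  set η := min (1/2) (Real.sqrt A) with hη_def
  have hη0 : 0 < η := lt_min (by norm_num) (Real.sqrt_pos.mpr hA0)
  have hη2 : η ≤ 1/2 := min_le_left _ _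
  have hηA : η^2 ≤ A := by
    have h1 : η ≤ Real.sqrt A := min_le_right _ _
    have := Real.sq_sqrt (le_of_lt hA0)
    nlinarith [Real.sqrt_nonneg A]
  obtain ⟨n, hn⟩ := exists_nat_gt (D / η)
  have hDn : D ≤ n * η := by
    rw [div_lt_iff₀ hη0] at hn
    linarith
  have := key η hη0 hη2 n a b ha hb hab hDn
  have hfin : 4*η^2*D ≤ ε := by
    have h1 : 4*η^2*D ≤ 4*A*D := by nlinarith
    have h2 : 4*A*D = ε * (D/(D+1)) := by
      rw [hA_def]
      field_simp
    have h3 : D/(D+1) ≤ 1 := by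
      rw [div_le_one (by linarith)]
      linarith
    calc 4*η^2*D ≤ ε * (D/(D+1)) := by rw [← h2]; exact h1
      _ ≤ ε * 1 := by
        apply mul_le_mul_of_nonneg_left h3 (le_of_lt hε)
      _ = ε := by ring
  calc |θ b - θ a| ≤ (1 + 4*η^2) * D := this
    _ = D + 4*η^2*D := by ring
    _ ≤ D + ε := by linarith

end L1

section Curve
variable {L : ℝ} {θ N : ℝ → ℝ}

lemma intg (hL : 0 < L) (hθc : ContinuousOn θ (Icc 0 L)) (f : ℝ → ℝ) (hf : Continuous f) :
    IntervalIntegrable (fun s => f (θ s)) volume 0 L := by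
  apply ContinuousOn.intervalIntegrable
  rw [uIcc_of_le hL.le]
  exact hf.comp_continuousOn hθc

/-- expansion of  ∫ cos (θ s - φ')  -/
lemma int_cos_shift (hL : 0 < L) (hθc : ContinuousOn θ (Icc 0 L)) (φ' : ℝ) :
    ∫ s in (0:ℝ)..L, Real.cos (θ s - φ') =
      Real.cos φ' * (∫ s in (0:ℝ)..L, Real.cos (θ s)) +
      Real.sin φ' * (∫ s in (0:ℝ)..L, Real.sin (θ s)) := by
  have h1 : ∀ s, Real.cos (θ s - φ') = Real.cos (θ s) * Real.cos φ' + Real.sin (θ s) * Real.sin φ' :=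
    fun s => Real.cos_sub _ _
  rw [intervalIntegral.integral_congr (g := fun s => Real.cos (θ s) * Real.cos φ' + Real.sin (θ s) * Real.sin φ') (fun s _ => h1 s)]
  rw [intervalIntegral.integral_add ((intg hL hθc _ Real.continuous_cos).mul_const _)
    ((intg hL hθc _ Real.continuous_sin).mul_const _)]
  rw [intervalIntegral.integral_mul_const, intervalIntegral.integral_mul_const]
  ring

lemma int_sin_shift (hL : 0 < L) (hθc : ContinuousOn θ (Icc 0 L)) (φ' : ℝ) :
    ∫ s in (0:ℝ)..L, Real.sin (θ s - φ') =
      Real.cos φ' * (∫ s in (0:ℝ)..L, Real.sin (θ s)) -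
      Real.sin φ' * (∫ s in (0:ℝ)..L, Real.cos (θ s)) := by
  have h1 : ∀ s, Real.sin (θ s - φ') = Real.sin (θ s) * Real.cos φ' - Real.cos (θ s) * Real.sin φ' :=
    fun s => Real.sin_sub _ _
  rw [intervalIntegral.integral_congr (g := fun s => Real.sin (θ s) * Real.cos φ' - Real.cos (θ s) * Real.sin φ') (fun s _ => h1 s)]
  rw [intervalIntegral.integral_sub ((intg hL hθc _ Real.continuous_sin).mul_const _)
    ((intg hL hθc _ Real.continuous_cos).mul_const _)]
  rw [intervalIntegral.integral_mul_const, intervalIntegral.integral_mul_const]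
  ring

lemma int_sin_shift' (hL : 0 < L) (hθc : ContinuousOn θ (Icc 0 L)) (φ' : ℝ) :
    ∫ s in (0:ℝ)..L, Real.sin (φ' - θ s) =
      Real.sin φ' * (∫ s in (0:ℝ)..L, Real.cos (θ s)) -
      Real.cos φ' * (∫ s in (0:ℝ)..L, Real.sin (θ s)) := by
  have h1 : ∀ s, Real.sin (φ' - θ s) = Real.sin φ' * Real.cos (θ s) - Real.cos φ' * Real.sin (θ s) :=
    fun s => Real.sin_sub _ _
  rw [intervalIntegral.integral_congr (g := fun s => Real.sin φ' * Real.cos (θ s) - Real.cos φ' * Real.sin (θ s)) (fun s _ => h1 s)]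
  rw [intervalIntegral.integral_sub ((intg hL hθc _ Real.continuous_cos).const_mul _)
    ((intg hL hθc _ Real.continuous_sin).const_mul _)]
  rw [intervalIntegral.integral_const_mul, intervalIntegral.integral_const_mul]

/-- midpoint positivity : if the oscillation is < π the integral of cos(θ - μ) is positive -/
lemma midpoint_pos (hL : 0 < L) (hθc : ContinuousOn θ (Icc 0 L)) {m M : ℝ}
    (hmem : ∀ s ∈ Icc (0:ℝ) L, θ s ∈ Icc m M) (hmM : m ≤ M) (hw : M - m < π) :
    0 < ∫ s in (0:ℝ)..L, Real.cos (θ s - (m+M)/2) := by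
  have hπ := Real.pi_pos
  have hcw : 0 < Real.cos ((M-m)/2) := by
    apply Real.cos_pos_of_mem_Ioo
    constructor
    · linarith
    · linarith
  have hpt : ∀ s ∈ Icc (0:ℝ) L, Real.cos ((M-m)/2) ≤ Real.cos (θ s - (m+M)/2) := by
    intro s hs
    obtain ⟨h1, h2⟩ := hmem s hs
    have habs : |θ s - (m+M)/2| ≤ (M-m)/2 := by
      rw [abs_le]; constructor <;> linarith
    calc Real.cos ((M-m)/2) ≤ Real.cos (|θ s - (m+M)/2|) :=
          Real.cos_le_cos_of_nonneg_of_le_pi (abs_nonneg _) (by linarith) habs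
      _ = Real.cos (θ s - (m+M)/2) := Real.cos_abs _
  have hint : IntervalIntegrable (fun s => Real.cos (θ s - (m+M)/2)) volume 0 L := by
    have := intg hL hθc (fun x => Real.cos (x - (m+M)/2))
      (Real.continuous_cos.comp (continuous_id.sub continuous_const))
    exact this
  calc (0:ℝ) < L * Real.cos ((M-m)/2) := by positivity
    _ = ∫ _ in (0:ℝ)..L, Real.cos ((M-m)/2) := by
        rw [intervalIntegral.integral_const]
        simp
    _ ≤ ∫ s in (0:ℝ)..L, Real.cos (θ s - (m+M)/2) := by
        apply intervalIntegral.integral_mono_on hL.le intervalIntegrable_const hint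
        exact hpt

/-- per-curve bound : zero chord case -/
lemma curve_zero (hL : 0 < L) (hθc : ContinuousOn θ (Icc 0 L))
    (hL1 : ∀ ⦃s t : ℝ⦄, s ∈ Icc 0 L → t ∈ Icc 0 L → s ≤ t → |θ t - θ s| ≤ N t - N s)
    (hc₀ : ∫ s in (0:ℝ)..L, Real.cos (θ s) = 0)
    (hc₁ : ∫ s in (0:ℝ)..L, Real.sin (θ s) = 0) :
    π ≤ N L - N 0 := by
  have h0m : (0:ℝ) ∈ Icc (0:ℝ) L := ⟨le_refl _, hL.le⟩
  have hLm : L ∈ Icc (0:ℝ) L := ⟨hL.le, le_refl _⟩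
  obtain ⟨xM, hxMmem, hxM⟩ := isCompact_Icc.exists_isMaxOn ⟨0, h0m⟩ hθc
  obtain ⟨xm, hxmmem, hxm⟩ := isCompact_Icc.exists_isMinOn ⟨0, h0m⟩ hθc
  set M := θ xM with hM
  set m := θ xm with hm
  have hmem : ∀ s ∈ Icc (0:ℝ) L, θ s ∈ Icc m M := fun s hs => ⟨hxm hs, hxM hs⟩
  have hmM : m ≤ M := (hmem 0 h0m).1.trans (hmem 0 h0m).2
  have hwide : π ≤ M - m := by
    by_contra hw
    push_neg at hw
    have hpos := midpoint_pos hL hθc hmem hmM hw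
    rw [int_cos_shift hL hθc, hc₀, hc₁] at hpos
    simp at hpos
  -- N L - N 0 ≥ M - m  via the three-point estimate
  have key : M - m ≤ N L - N 0 := by
    rcases le_total xM xm with hor | hor
    · have e1 := hL1 h0m hxMmem hxMmem.1
      have e2 := hL1 hxMmem hxmmem hor
      have e3 := hL1 hxmmem hLm hxmmem.2
      have a2'' : θ xM - θ xm ≤ |θ xm - θ xM| := by
        rw [abs_sub_comm]; exact le_abs_self _
      linarith [abs_nonneg (θ xM - θ 0), abs_nonneg (θ L - θ xm)]
    · have e1 := hL1 h0m hxmmem hxmmem.1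
      have e2 := hL1 hxmmem hxMmem hor
      have e3 := hL1 hxMmem hLm hxMmem.2
      have a2 := le_abs_self (θ xM - θ xm)
      linarith [abs_nonneg (θ xm - θ 0), abs_nonneg (θ L - θ xM)]
  linarith

/-- per-curve bound : positive chord case -/
lemma curve_pos (hL : 0 < L) (hθc : ContinuousOn θ (Icc 0 L))
    (hL1 : ∀ ⦃s t : ℝ⦄, s ∈ Icc 0 L → t ∈ Icc 0 L → s ≤ t → |θ t - θ s| ≤ N t - N s)
    {r φ : ℝ} (hr : 0 < r)
    (hc₀ : ∫ s in (0:ℝ)..L, Real.cos (θ s) = r * Real.cos φ)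
    (hc₁ : ∫ s in (0:ℝ)..L, Real.sin (θ s) = r * Real.sin φ) :
    dZ (θ 0 - φ) + dZ (θ L - φ) ≤ N L - N 0 := by
  have hπ := Real.pi_pos
  have h0m : (0:ℝ) ∈ Icc (0:ℝ) L := ⟨le_refl _, hL.le⟩
  have hLm : L ∈ Icc (0:ℝ) L := ⟨hL.le, le_refl _⟩
  obtain ⟨xM, hxMmem, hxM⟩ := isCompact_Icc.exists_isMaxOn ⟨0, h0m⟩ hθc
  obtain ⟨xm, hxmmem, hxm⟩ := isCompact_Icc.exists_isMinOn ⟨0, h0m⟩ hθc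
  set M := θ xM with hM
  set m := θ xm with hm
  have hmem : ∀ s ∈ Icc (0:ℝ) L, θ s ∈ Icc m M := fun s hs => ⟨hxm hs, hxM hs⟩
  have hmM : m ≤ M := (hmem 0 h0m).1.trans (hmem 0 h0m).2
  have hθ0 : θ 0 ∈ Icc m M := hmem 0 h0m
  have hθL : θ L ∈ Icc m M := hmem L hLm
  -- three-point estimate
  have key1 : 2*(M - m) - |θ 0 - θ L| ≤ N L - N 0 := by
    have habs := abs_sub_abs_le_abs_sub (θ 0) (θ L)
    rcases le_total xM xm with hor | hor
    · have e1 := hL1 h0m hxMmem hxMmem.1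
      have e2 := hL1 hxMmem hxmmem hor
      have e3 := hL1 hxmmem hLm hxmmem.2
      have a1 := le_abs_self (θ xM - θ 0)
      have a2' := neg_abs_le (θ xm - θ xM)
      have a3 := le_abs_self (θ L - θ xm)
      have a4 := le_abs_self (θ 0 - θ L)
      linarith
    · have e1 := hL1 h0m hxmmem hxmmem.1
      have e2 := hL1 hxmmem hxMmem hor
      have e3 := hL1 hxMmem hLm hxMmem.2
      have a1 := neg_abs_le (θ xm - θ 0)
      have a2 := le_abs_self (θ xM - θ xm)
      have a3 := neg_abs_le (θ L - θ xM)
      have a4 := neg_abs_le (θ 0 - θ L)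
      linarith
  -- the representative of φ - m in [0, 2π)
  set kf := ⌊(φ - m)/(2*π)⌋ with hkf
  set ρ := φ - m - 2*π*kf with hρ
  have htp : (0:ℝ) < 2*π := by linarith
  have hρ0 : 0 ≤ ρ := by
    have := Int.floor_le ((φ - m)/(2*π))
    rw [hρ]
    have h2 : (kf:ℝ) * (2*π) ≤ φ - m := by
      calc (kf:ℝ) * (2*π) ≤ ((φ - m)/(2*π)) * (2*π) := by
            apply mul_le_mul_of_nonneg_right this (le_of_lt htp)
        _ = φ - m := by field_simp
    linarith
  have hρ2π : ρ < 2*π := by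
    have := Int.lt_floor_add_one ((φ - m)/(2*π))
    rw [hρ]
    have h2 : φ - m < ((kf:ℝ) + 1) * (2*π) := by
      calc φ - m = ((φ - m)/(2*π)) * (2*π) := by field_simp
        _ < ((kf:ℝ) + 1) * (2*π) := by
            apply mul_lt_mul_of_pos_right this htp
    linarith
  have hφeq : φ = m + ρ + 2*π*kf := by rw [hρ]; ring
  by_cases hcase : ρ ≤ M - m
  · -- branch 1
    have hp : m + ρ ∈ Icc m M := ⟨by linarith, by linarith⟩
    have hpk : m + ρ = φ + 2*π*(-kf : ℤ) := by push_cast; rw [hφeq]; ring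
    have := branch1 hmM hp hθ0 hθL (-kf) hpk
    linarith
  · by_cases hwide : π ≤ M - m
    · have := branch2 (φ := φ) hwide hθ0 hθL
      linarith
    · -- contradiction : w < π and ρ > w
      exfalso
      push_neg at hcase hwide
      -- midpoint gives cos (ρ - w/2) > 0
      have hpos := midpoint_pos hL hθc hmem hmM hwide
      rw [int_cos_shift hL hθc, hc₀, hc₁] at hpos
      have hcosφμ : 0 < Real.cos (φ - (m+M)/2) := by
        have e : Real.cos ((m+M)/2) * (r * Real.cos φ) + Real.sin ((m+M)/2) * (r * Real.sin φ)
            = r * Real.cos (φ - (m+M)/2) := by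
          rw [Real.cos_sub]; ring
        rw [e] at hpos
        nlinarith
      set q := ρ - (M - m)/2 with hq
      have hcosq : 0 < Real.cos q := by
        have e : φ - (m+M)/2 = q + 2*π*kf := by rw [hq, hφeq]; ring
        have := Real.cos_add_int_mul_two_pi q kf
        rw [e] at hcosφμ
        rw [show (q:ℝ) + 2*π*kf = q + kf*(2*π) by ring] at hcosφμ
        rwa [this] at hcosφμ
      have hql : (M - m)/2 < q := by rw [hq]; linarith
      have hqu : q < 2*π - (M - m)/2 := by rw [hq]; linarith
      rcases le_or_gt (π/2) q with hq2 | hq2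
      · -- q ∈ [π/2, ...] : must have q > 3π/2 ; subcase B
        have hq3 : 3*π/2 < q := by
          by_contra hcon
          push_neg at hcon
          have := Real.cos_nonpos_of_pi_div_two_le_of_le hq2 (by linarith)
          linarith
        have hintB : ∫ s in (0:ℝ)..L, Real.sin (θ s - φ) = 0 := by
          rw [int_sin_shift hL hθc, hc₀, hc₁]; ring
        have hposB : 0 < ∫ s in (0:ℝ)..L, Real.sin (θ s - φ) := by
          apply intervalIntegral.intervalIntegral_pos_of_pos_on
          · exact intg hL hθc (fun x => Real.sin (x - φ))
              (Real.continuous_sin.comp (continuous_id.sub continuous_const)) 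
          · intro s hs
            have hsIcc : s ∈ Icc (0:ℝ) L := ⟨hs.1.le, hs.2.le⟩
            obtain ⟨hm1, hm2⟩ := hmem s hsIcc
            have eA : θ s - φ = (θ s - m - ρ + 2*π) + (-(kf+1) : ℤ)*(2*π) := by
              push_cast; rw [hφeq]; ring
            rw [eA, Real.sin_add_int_mul_two_pi]
            apply Real.sin_pos_of_pos_of_lt_pi
            · linarith
            · linarith
          · exact hL
        linarith
      · -- q < π/2 : subcase A
        have hintA : ∫ s in (0:ℝ)..L, Real.sin (φ - θ s) = 0 := by
          rw [int_sin_shift' hL hθc, hc₀, hc₁]; ring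
        have hposA : 0 < ∫ s in (0:ℝ)..L, Real.sin (φ - θ s) := by
          apply intervalIntegral.intervalIntegral_pos_of_pos_on
          · exact intg hL hθc (fun x => Real.sin (φ - x))
              (Real.continuous_sin.comp (continuous_const.sub continuous_id))
          · intro s hs
            have hsIcc : s ∈ Icc (0:ℝ) L := ⟨hs.1.le, hs.2.le⟩
            obtain ⟨hm1, hm2⟩ := hmem s hsIcc
            have eB : φ - θ s = (ρ - (θ s - m)) + (kf : ℤ)*(2*π) := by
              push_cast; rw [hφeq]; ring
            rw [eB, Real.sin_add_int_mul_two_pi]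
            apply Real.sin_pos_of_pos_of_lt_pi
            · linarith
            · linarith
          · exact hL
        linarith

end Curve


/-- trigonometric chord identity -/
lemma chord_identity (a b : ℝ) :
    (Real.cos a - Real.cos b)^2 + (Real.sin a - Real.sin b)^2 = (2*Real.sin ((a-b)/2))^2 := by
  have h1 := Real.sin_sq_add_cos_sq a
  have h2 := Real.sin_sq_add_cos_sq b
  have h3 := Real.cos_sub a b
  have h4 := Real.cos_two_mul ((a-b)/2)
  have h5 := Real.sin_sq_add_cos_sq ((a-b)/2)
  rw [show 2*((a-b)/2) = a - b by ring] at h4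
  nlinarith [h1, h2, h3, h4, h5]

lemma percurve (L : ℝ) (hL : 0 < L) (T T'' : ℝ → EuclideanSpace ℝ (Fin 2))
    (hAC : ∀ s ∈ Icc (0:ℝ) L, T s = T 0 + ∫ u in (0:ℝ)..s, T'' u)
    (hint1 : IntervalIntegrable T'' volume 0 L)
    (hspeed : ∀ s ∈ Icc (0:ℝ) L, ‖T s‖ = 1) :
    ∃ θ : ℝ → ℝ,
      (∀ s ∈ Icc (0:ℝ) L, T s 0 = Real.cos (θ s) ∧ T s 1 = Real.sin (θ s)) ∧
      ContinuousOn θ (Icc 0 L) ∧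
      ∀ ⦃s t : ℝ⦄, s ∈ Icc (0:ℝ) L → t ∈ Icc (0:ℝ) L → s ≤ t →
        |θ t - θ s| ≤ (∫ u in (0:ℝ)..t, ‖T'' u‖) - (∫ u in (0:ℝ)..s, ‖T'' u‖) := by
  have huIcc : uIcc (0:ℝ) L = Icc 0 L := uIcc_of_le hL.le
  -- continuity of T
  have hTc : ContinuousOn T (Icc 0 L) := by
    have hprim : ContinuousOn (fun s => T 0 + ∫ u in (0:ℝ)..s, T'' u) (Icc 0 L) := by
      apply ContinuousOn.add continuousOn_const
      have := intervalIntegral.continuousOn_primitive_interval'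
        (a := 0) (b₁ := 0) (b₂ := L) hint1 (by rw [huIcc]; exact ⟨le_refl _, hL.le⟩)
      rwa [huIcc] at this
    exact hprim.congr hAC
  -- definitions of N
  set N : ℝ → ℝ := fun s => ∫ u in (0:ℝ)..s, ‖T'' u‖ with hN
  have hintN : IntervalIntegrable (fun u => ‖T'' u‖) volume 0 L := hint1.norm
  have hNc : ContinuousOn N (Icc 0 L) := by
    have := intervalIntegral.continuousOn_primitive_interval'
      (a := 0) (b₁ := 0) (b₂ := L) hintN (by rw [huIcc]; exact ⟨le_refl _, hL.le⟩)
    rwa [huIcc] at this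
  have hIsub : ∀ ⦃s : ℝ⦄, s ∈ Icc (0:ℝ) L → IntervalIntegrable T'' volume 0 s := by
    intro s hs
    apply hint1.mono_set
    rw [huIcc, uIcc_of_le hs.1]
    exact Icc_subset_Icc (le_refl _) hs.2
  have hIsubN : ∀ ⦃s : ℝ⦄, s ∈ Icc (0:ℝ) L → IntervalIntegrable (fun u => ‖T'' u‖) volume 0 s :=
    fun s hs => (hIsub hs).norm
  have hNdiff : ∀ ⦃s t : ℝ⦄, s ∈ Icc (0:ℝ) L → t ∈ Icc (0:ℝ) L →
      N t - N s = ∫ u in s..t, ‖T'' u‖ := by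
    intro s t hs ht
    exact intervalIntegral.integral_interval_sub_left (hIsubN ht) (hIsubN hs)
  have hNmono : ∀ ⦃s t : ℝ⦄, s ∈ Icc (0:ℝ) L → t ∈ Icc (0:ℝ) L → s ≤ t → N s ≤ N t := by
    intro s t hs ht hst
    have h := hNdiff hs ht
    have : 0 ≤ ∫ u in s..t, ‖T'' u‖ :=
      intervalIntegral.integral_nonneg hst (fun u _ => norm_nonneg _)
    linarith
  -- chord bound
  have hchord : ∀ ⦃s t : ℝ⦄, s ∈ Icc (0:ℝ) L → t ∈ Icc (0:ℝ) L → s ≤ t →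
      ‖T t - T s‖ ≤ N t - N s := by
    intro s t hs ht hst
    have e : T t - T s = ∫ u in s..t, T'' u := by
      rw [hAC t ht, hAC s hs]
      have := intervalIntegral.integral_interval_sub_left (hIsub ht) (hIsub hs)
      rw [← this]
      abel
    rw [e, hNdiff hs ht]
    exact intervalIntegral.norm_integral_le_integral_norm hst
  -- the complex tangent
  set z : ℝ → ℂ := fun s => (T s 0 : ℂ) + (T s 1 : ℂ) * Complex.I with hz
  have hcomp : ∀ s, (z s).re = T s 0 ∧ (z s).im = T s 1 := by
    intro s
    constructor <;> simp [hz]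
  have hsq : ∀ s ∈ Icc (0:ℝ) L, (T s 0)^2 + (T s 1)^2 = 1 := by
    intro s hs
    have h := hspeed s hs
    rw [EuclideanSpace.norm_eq] at h
    rw [Fin.sum_univ_two] at h
    have h2 : ‖T s 0‖^2 + ‖T s 1‖^2 = 1 := Real.sqrt_eq_one.mp h
    simpa [Real.norm_eq_abs, sq_abs] using h2
  have hzc : ContinuousOn z (Icc 0 L) := by
    apply ContinuousOn.add
    · apply Complex.continuous_ofReal.comp_continuousOn
      exact (PiLp.continuous_apply 2 _ (0 : Fin 2)).comp_continuousOn hTc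
    · apply ContinuousOn.mul _ continuousOn_const
      apply Complex.continuous_ofReal.comp_continuousOn
      exact (PiLp.continuous_apply 2 _ (1 : Fin 2)).comp_continuousOn hTc
  have hz1 : ∀ s ∈ Icc (0:ℝ) L, ‖z s‖ = 1 := by
    intro s hs
    rw [Complex.norm_def, Complex.normSq_apply, (hcomp s).1, (hcomp s).2]
    rw [show T s 0 * T s 0 + T s 1 * T s 1 = (T s 0)^2 + (T s 1)^2 by ring, hsq s hs]
    exact Real.sqrt_one
  obtain ⟨θ, hθc, hθe⟩ := exists_lift L hL.le z hzc hz1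
  have hcos : ∀ s ∈ Icc (0:ℝ) L, T s 0 = Real.cos (θ s) ∧ T s 1 = Real.sin (θ s) := by
    intro s hs
    have h := hθe s hs
    have hre : (z s).re = Real.cos (θ s) := by rw [h]; exact Complex.exp_ofReal_mul_I_re _
    have him : (z s).im = Real.sin (θ s) := by rw [h]; exact Complex.exp_ofReal_mul_I_im _
    rw [(hcomp s).1] at hre
    rw [(hcomp s).2] at him
    exact ⟨hre, him⟩
  -- the sine-chord bound
  have hS : ∀ ⦃s t : ℝ⦄, s ∈ Icc (0:ℝ) L → t ∈ Icc (0:ℝ) L → s ≤ t →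
      2*|Real.sin ((θ t - θ s)/2)| ≤ N t - N s := by
    intro s t hs ht hst
    have hnorm : ‖T t - T s‖ = 2*|Real.sin ((θ t - θ s)/2)| := by
      rw [EuclideanSpace.norm_eq, Fin.sum_univ_two]
      have e0 : (T t - T s) 0 = T t 0 - T s 0 := rfl
      have e1 : (T t - T s) 1 = T t 1 - T s 1 := rfl
      rw [e0, e1, (hcos t ht).1, (hcos t ht).2, (hcos s hs).1, (hcos s hs).2]
      rw [Real.norm_eq_abs, Real.norm_eq_abs, sq_abs, sq_abs]
      rw [chord_identity (θ t) (θ s), Real.sqrt_sq_eq_abs, abs_mul]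
      norm_num
    rw [← hnorm]
    exact hchord hs ht hst
  refine ⟨θ, hcos, hθc, ?_⟩
  intro s t hs ht hst
  exact lift_global hθc hNc hNmono hS hs ht hst


end ThetaAux

open ThetaAux Real in
/-- Any Theta-network formed by three arclength-parametrized `H²` planar
curves sharing both endpoints, whose unit tangents at each of the two triple junctions form
pairwise angles of `2π/3` (i.e. have pairwise inner products `-1/2`), has total elastic
energy at least `16π/3`. -/
theorem theta_network_energy_lower_bound
    (ℓ : Fin 3 → ℝ) (hℓ : ∀ i, 0 < ℓ i)
    (γ γ' γ'' : Fin 3 → ℝ → EuclideanSpace ℝ (Fin 2))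
    (hderiv : ∀ i, ∀ s ∈ Icc (0:ℝ) (ℓ i),
      HasDerivWithinAt (γ i) (γ' i s) (Icc (0:ℝ) (ℓ i)) s)
    (hAC : ∀ i, ∀ s ∈ Icc (0:ℝ) (ℓ i), γ' i s = γ' i 0 + ∫ u in (0:ℝ)..s, γ'' i u)
    (hint1 : ∀ i, IntervalIntegrable (γ'' i) volume 0 (ℓ i))
    (hint2 : ∀ i, IntervalIntegrable (fun s => ‖γ'' i s‖ ^ 2) volume 0 (ℓ i))
    (hspeed : ∀ i, ∀ s ∈ Icc (0:ℝ) (ℓ i), ‖γ' i s‖ = 1)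
    (hjunc0 : ∀ i j, γ i 0 = γ j 0)
    (hjunc1 : ∀ i j, γ i (ℓ i) = γ j (ℓ j))
    (hang0 : ∀ i j, i ≠ j → ⟪γ' i 0, γ' j 0⟫ = -(1/2 : ℝ))
    (hang1 : ∀ i j, i ≠ j → ⟪γ' i (ℓ i), γ' j (ℓ j)⟫ = -(1/2 : ℝ)) :
    16 * Real.pi / 3 ≤ ∑ i, ((∫ s in (0:ℝ)..(ℓ i), ‖γ'' i s‖ ^ 2) + ℓ i) := by
  have hπ := Real.pi_pos
  have h0mem : ∀ i, (0:ℝ) ∈ Icc (0:ℝ) (ℓ i) := fun i => ⟨le_refl _, (hℓ i).le⟩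
  have hLmem : ∀ i, ℓ i ∈ Icc (0:ℝ) (ℓ i) := fun i => ⟨(hℓ i).le, le_refl _⟩
  -- continuity of the tangents
  have hTc : ∀ i, ContinuousOn (γ' i) (Icc 0 (ℓ i)) := by
    intro i
    have huIcc : uIcc (0:ℝ) (ℓ i) = Icc 0 (ℓ i) := uIcc_of_le (hℓ i).le
    have hprim : ContinuousOn (fun s => γ' i 0 + ∫ u in (0:ℝ)..s, γ'' i u) (Icc 0 (ℓ i)) := by
      apply ContinuousOn.add continuousOn_const
      have := intervalIntegral.continuousOn_primitive_interval'
        (a := 0) (b₁ := 0) (b₂ := ℓ i) (hint1 i) (by rw [huIcc]; exact h0mem i)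
      rwa [huIcc] at this
    exact hprim.congr (hAC i)
  have hTint : ∀ i, IntervalIntegrable (γ' i) volume 0 (ℓ i) := by
    intro i
    apply ContinuousOn.intervalIntegrable
    rw [uIcc_of_le (hℓ i).le]
    exact hTc i
  -- FTC : chord
  have hchordv : ∀ i, (∫ s in (0:ℝ)..(ℓ i), γ' i s) = γ i (ℓ i) - γ i 0 := by
    intro i
    have hcont : ContinuousOn (γ i) (Icc 0 (ℓ i)) :=
      fun s hs => (hderiv i s hs).continuousWithinAt
    have hder : ∀ x ∈ Ioo (0:ℝ) (ℓ i), HasDerivWithinAt (γ i) (γ' i x) (Ioi x) x := by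
      intro x hx
      have h1 := hderiv i x ⟨hx.1.le, hx.2.le⟩
      exact (h1.hasDerivAt (Icc_mem_nhds hx.1 hx.2)).hasDerivWithinAt
    exact intervalIntegral.integral_eq_sub_of_hasDeriv_right_of_le (hℓ i).le hcont hder (hTint i)
  -- common chord
  set C : EuclideanSpace ℝ (Fin 2) := γ 0 (ℓ 0) - γ 0 0 with hC
  have hCi : ∀ i, γ i (ℓ i) - γ i 0 = C := by
    intro i
    rw [hC, hjunc1 i 0, hjunc0 i 0]
  -- lifts
  have hforall : ∀ i, ∃ θ : ℝ → ℝ,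
      (∀ s ∈ Icc (0:ℝ) (ℓ i), γ' i s 0 = Real.cos (θ s) ∧ γ' i s 1 = Real.sin (θ s)) ∧
      ContinuousOn θ (Icc 0 (ℓ i)) ∧
      ∀ ⦃s t : ℝ⦄, s ∈ Icc (0:ℝ) (ℓ i) → t ∈ Icc (0:ℝ) (ℓ i) → s ≤ t →
        |θ t - θ s| ≤ (∫ u in (0:ℝ)..t, ‖γ'' i u‖) - (∫ u in (0:ℝ)..s, ‖γ'' i u‖) :=
    fun i => percurve (ℓ i) (hℓ i) (γ' i) (γ'' i) (hAC i) (hint1 i) (hspeed i)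
  choose Θ hΘcomp hΘc hΘL1 using hforall
  -- component integrals
  have hccomp : ∀ i, (∫ s in (0:ℝ)..(ℓ i), Real.cos (Θ i s)) = C 0 ∧
      (∫ s in (0:ℝ)..(ℓ i), Real.sin (Θ i s)) = C 1 := by
    intro i
    have hproj0 := (EuclideanSpace.proj (0 : Fin 2) : EuclideanSpace ℝ (Fin 2) →L[ℝ] ℝ).intervalIntegral_comp_comm (hTint i)
    have hproj1 := (EuclideanSpace.proj (1 : Fin 2) : EuclideanSpace ℝ (Fin 2) →L[ℝ] ℝ).intervalIntegral_comp_comm (hTint i)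
    rw [hchordv i, hCi i] at hproj0 hproj1
    constructor
    · rw [← show ((EuclideanSpace.proj (0 : Fin 2) : EuclideanSpace ℝ (Fin 2) →L[ℝ] ℝ) C) = C 0 from rfl, ← hproj0]
      apply intervalIntegral.integral_congr
      intro s hs
      rw [uIcc_of_le (hℓ i).le] at hs
      exact ((hΘcomp i s hs).1).symm
    · rw [← show ((EuclideanSpace.proj (1 : Fin 2) : EuclideanSpace ℝ (Fin 2) →L[ℝ] ℝ) C) = C 1 from rfl, ← hproj1]
      apply intervalIntegral.integral_congr
      intro s hs
      rw [uIcc_of_le (hℓ i).le] at hs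
      exact ((hΘcomp i s hs).2).symm
  -- energy vs total curvature
  have hE : ∀ i, 2 * (∫ u in (0:ℝ)..(ℓ i), ‖γ'' i u‖) ≤
      (∫ s in (0:ℝ)..(ℓ i), ‖γ'' i s‖^2) + ℓ i := by
    intro i
    have h1 : (∫ u in (0:ℝ)..(ℓ i), 2*‖γ'' i u‖) ≤ ∫ s in (0:ℝ)..(ℓ i), (‖γ'' i s‖^2 + 1) := by
      apply intervalIntegral.integral_mono_on (hℓ i).le
      · exact (hint1 i).norm.const_mul 2
      · exact (hint2 i).add intervalIntegrable_const
      · intro x _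
        nlinarith [sq_nonneg (‖γ'' i x‖ - 1), norm_nonneg (γ'' i x)]
    rw [intervalIntegral.integral_const_mul] at h1
    rw [intervalIntegral.integral_add (hint2 i) intervalIntegrable_const,
      intervalIntegral.integral_const] at h1
    simp only [smul_eq_mul, mul_one, sub_zero] at h1
    linarith
  -- junction angles
  have hangΘ0 : ∀ i j, i ≠ j → dZ (Θ i 0 - Θ j 0) = 2*π/3 := by
    intro i j hij
    apply dZ_of_cos
    have hinner := hang0 i j hij
    have hci := hΘcomp i 0 (h0mem i)
    have hcj := hΘcomp j 0 (h0mem j)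
    rw [Real.cos_sub]
    rw [← hci.1, ← hci.2, ← hcj.1, ← hcj.2]
    rw [← hinner]
    simp [PiLp.inner_apply, RCLike.inner_apply, Fin.sum_univ_two, mul_comm]
  have hangΘ1 : ∀ i j, i ≠ j → dZ (Θ i (ℓ i) - Θ j (ℓ j)) = 2*π/3 := by
    intro i j hij
    apply dZ_of_cos
    have hinner := hang1 i j hij
    have hci := hΘcomp i (ℓ i) (hLmem i)
    have hcj := hΘcomp j (ℓ j) (hLmem j)
    rw [Real.cos_sub]
    rw [← hci.1, ← hci.2, ← hcj.1, ← hcj.2]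
    rw [← hinner]
    simp [PiLp.inner_apply, RCLike.inner_apply, Fin.sum_univ_two, mul_comm]
  -- split on chord zero
  set w : ℂ := ((C 0 : ℝ) : ℂ) + ((C 1 : ℝ) : ℂ) * Complex.I with hw_def
  by_cases hw : w = 0
  · -- zero chord case
    have hcx : C 0 = 0 := by
      have := congrArg Complex.re hw
      simpa [hw_def] using this
    have hcy : C 1 = 0 := by
      have := congrArg Complex.im hw
      simpa [hw_def] using this
    have hNi : ∀ i, π ≤ ∫ u in (0:ℝ)..(ℓ i), ‖γ'' i u‖ := by
      intro i
      have := curve_zero (N := fun s => ∫ u in (0:ℝ)..s, ‖γ'' i u‖) (hℓ i) (hΘc i)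
        (hΘL1 i) (by rw [(hccomp i).1]; exact hcx) (by rw [(hccomp i).2]; exact hcy)
      simpa using this
    rw [Fin.sum_univ_three]
    have e0 := hE 0; have e1 := hE 1; have e2 := hE 2
    have n0 := hNi 0; have n1 := hNi 1; have n2 := hNi 2
    linarith
  · -- nonzero chord
    set r := ‖w‖ with hr_def
    have hr : 0 < r := norm_pos_iff.mpr hw
    set φ := Complex.arg w with hφ_def
    have hwre : w.re = C 0 := by simp [hw_def]
    have hwim : w.im = C 1 := by simp [hw_def]
    have hcx : C 0 = r * Real.cos φ := by
      rw [hφ_def, Complex.cos_arg hw, hwre, hr_def]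
      field_simp
    have hcy : C 1 = r * Real.sin φ := by
      rw [hφ_def, Complex.sin_arg, hwim, hr_def]
      field_simp
    have hdZi : ∀ i, dZ (Θ i 0 - φ) + dZ (Θ i (ℓ i) - φ) ≤ ∫ u in (0:ℝ)..(ℓ i), ‖γ'' i u‖ := by
      intro i
      have := curve_pos (N := fun s => ∫ u in (0:ℝ)..s, ‖γ'' i u‖) (hℓ i) (hΘc i)
        (hΘL1 i) hr (by rw [(hccomp i).1]; exact hcx) (by rw [(hccomp i).2]; exact hcy)
      simpa using this
    have hj0 : 4*π/3 ≤ dZ (Θ 0 0 - φ) + dZ (Θ 1 0 - φ) + dZ (Θ 2 0 - φ) := by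
      apply junction3
      · rw [show (Θ 0 0 - φ) - (Θ 1 0 - φ) = Θ 0 0 - Θ 1 0 by ring]
        exact hangΘ0 0 1 (by decide)
      · rw [show (Θ 0 0 - φ) - (Θ 2 0 - φ) = Θ 0 0 - Θ 2 0 by ring]
        exact hangΘ0 0 2 (by decide)
      · rw [show (Θ 1 0 - φ) - (Θ 2 0 - φ) = Θ 1 0 - Θ 2 0 by ring]
        exact hangΘ0 1 2 (by decide)
    have hj1 : 4*π/3 ≤ dZ (Θ 0 (ℓ 0) - φ) + dZ (Θ 1 (ℓ 1) - φ) + dZ (Θ 2 (ℓ 2) - φ) := by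
      apply junction3
      · rw [show (Θ 0 (ℓ 0) - φ) - (Θ 1 (ℓ 1) - φ) = Θ 0 (ℓ 0) - Θ 1 (ℓ 1) by ring]
        exact hangΘ1 0 1 (by decide)
      · rw [show (Θ 0 (ℓ 0) - φ) - (Θ 2 (ℓ 2) - φ) = Θ 0 (ℓ 0) - Θ 2 (ℓ 2) by ring]
        exact hangΘ1 0 2 (by decide)
      · rw [show (Θ 1 (ℓ 1) - φ) - (Θ 2 (ℓ 2) - φ) = Θ 1 (ℓ 1) - Θ 2 (ℓ 2) by ring]
        exact hangΘ1 1 2 (by decide)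
    rw [Fin.sum_univ_three]
    have e0 := hE 0; have e1 := hE 1; have e2 := hE 2
    have d0 := hdZi 0; have d1 := hdZi 1; have d2 := hdZi 2
    linarith
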